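/- For every n ≥ 0, the associahedron hypergraph (linear graph) 𝕂ₙ = {{i} : 1 ≤ i ≤ n+1} ∪ {{i,i+1} : 1 ≤ i ≤ n} on H = {1,…,n+1} is a connected contextual hypergraph. -/

import Mathlib

open scoped Classical

noncomputable section

/-! ## Hypergraphs (nestohedra combinatorics), after Curien–Laplante-Anfossi:
hypergraphs, restrictions, connectivity, saturation, reconnected restriction,
constructs/constructions, the face order, the flip rewriting, and terms over the
associated signatures. -/

/-- A hypergraph on a finite vertex set: a finite set of nonempty hyperedges whose union is
the vertex set, assumed atomic (every singleton is a hyperedge). -/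
structure NestHypergraph (α : Type*) [DecidableEq α] where
  verts : Finset α
  edges : Finset (Finset α)
  edges_nonempty : ∀ e ∈ edges, e.Nonempty
  edges_subset : ∀ e ∈ edges, e ⊆ verts
  atomic : ∀ v ∈ verts, {v} ∈ edges

namespace NestHypergraph

variable {α : Type*} [DecidableEq α]

/-- The plain restriction `𝓗_X` of a hypergraph to a subset `X` of its vertices. -/
def restrict (H : NestHypergraph α) (X : Finset α) : NestHypergraph α where
  verts := X ∩ H.verts
  edges := H.edges.filter (· ⊆ X)
  edges_nonempty e he := H.edges_nonempty e (Finset.mem_filter.mp he).1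
  edges_subset e he :=
    Finset.subset_inter (Finset.mem_filter.mp he).2 (H.edges_subset e (Finset.mem_filter.mp he).1)
  atomic v hv := by
    rcases Finset.mem_inter.mp hv with ⟨h1, h2⟩
    exact Finset.mem_filter.mpr ⟨H.atomic v h2, Finset.singleton_subset_iff.mpr h1⟩

/-- A hypergraph is connected if its vertex set is nonempty and admits no nontrivial
partition `X₁ ∪ X₂` such that every edge lies in `X₁` or in `X₂`. -/
def Connected (H : NestHypergraph α) : Prop :=
  H.verts.Nonempty ∧ ∀ X₁ X₂ : Finset α, X₁.Nonempty → X₂.Nonempty →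
    Disjoint X₁ X₂ → X₁ ∪ X₂ = H.verts → ∃ e ∈ H.edges, ¬e ⊆ X₁ ∧ ¬e ⊆ X₂

/-- `C` is (the vertex set of) a connected component of `H`: a maximal connected subset. -/
def IsComponent (H : NestHypergraph α) (C : Finset α) : Prop :=
  C ⊆ H.verts ∧ (H.restrict C).Connected ∧
    ∀ D : Finset α, C ⊆ D → D ⊆ H.verts → (H.restrict D).Connected → D = C

/-- `y` and `z` lie in the same connected component of `H`. -/
def SameComponent (H : NestHypergraph α) (y z : α) : Prop :=
  ∃ C : Finset α, H.IsComponent C ∧ y ∈ C ∧ z ∈ C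

/-- The saturation `Sat(𝓗)`: the set of (nonempty) connected subsets of vertices. -/
def sat (H : NestHypergraph α) : Finset (Finset α) :=
  H.verts.powerset.filter fun X => (H.restrict X).Connected

theorem singleton_connected (H : NestHypergraph α) {v : α} (hv : v ∈ H.verts) :
    (H.restrict {v}).Connected := by
  constructor
  · exact ⟨v, Finset.mem_inter.mpr ⟨Finset.mem_singleton_self v, hv⟩⟩
  · intro X₁ X₂ h₁ h₂ hd hu
    exfalso
    have hv' : ({v} : Finset α) ∩ H.verts = {v} :=
      Finset.inter_eq_left.mpr (Finset.singleton_subset_iff.mpr hv)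
    have hu' : X₁ ∪ X₂ = ({v} : Finset α) := hu.trans hv'
    have hX₁ : X₁ ⊆ {v} := hu' ▸ Finset.subset_union_left
    have hX₂ : X₂ ⊆ {v} := hu' ▸ Finset.subset_union_right
    obtain ⟨a, ha⟩ := h₁
    obtain ⟨b, hb⟩ := h₂
    have ha' := Finset.mem_singleton.mp (hX₁ ha)
    have hb' := Finset.mem_singleton.mp (hX₂ hb)
    subst ha'; exact Finset.disjoint_left.mp hd ha (hb' ▸ hb)

/-- The reconnected restriction `𝓗 ↾ X` of `𝓗` to `X`. -/
def reconRestrict (H : NestHypergraph α) (X : Finset α) : NestHypergraph α where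
  verts := X ∩ H.verts
  edges := (H.sat.image (· ∩ X)).filter (·.Nonempty)
  edges_nonempty e he := (Finset.mem_filter.mp he).2
  edges_subset := by
    intro e he
    rcases Finset.mem_image.mp (Finset.mem_filter.mp he).1 with ⟨Z, hZ, rfl⟩
    have hZv : Z ⊆ H.verts := Finset.mem_powerset.mp (Finset.mem_filter.mp hZ).1
    exact fun a ha => Finset.mem_inter.mpr
      ⟨(Finset.mem_inter.mp ha).2, hZv (Finset.mem_inter.mp ha).1⟩
  atomic := by
    intro v hv
    rcases Finset.mem_inter.mp hv with ⟨h1, h2⟩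
    refine Finset.mem_filter.mpr ⟨Finset.mem_image.mpr ⟨{v}, ?_, ?_⟩, ?_⟩
    · exact Finset.mem_filter.mpr
        ⟨Finset.mem_powerset.mpr (Finset.singleton_subset_iff.mpr h2),
         H.singleton_connected h2⟩
    · exact Finset.inter_eq_left.mpr (Finset.singleton_subset_iff.mpr h1)
    · exact ⟨v, by simp [Finset.inter_eq_left.mpr (Finset.singleton_subset_iff.mpr h1)]⟩

/-- `x ⇝ {y,z}` in `𝓗`: after removing `x`, the vertices `y` and `z` lie in the same
connected component.  Its negation is "`x` disconnects `y` and `z` in `𝓗`". -/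
def Links (H : NestHypergraph α) (x y z : α) : Prop :=
  (H.restrict (H.verts \ {x})).SameComponent y z

/-- A hypergraph is contextual if for every connected subset `Y` of cardinality at least 3
and all distinct `x, y, z ∈ Y`, `x` disconnects `y` and `z` in `𝓗_Y` iff it does in `𝓗`. -/
def Contextual (H : NestHypergraph α) : Prop :=
  ∀ Y : Finset α, Y ⊆ H.verts → (H.restrict Y).Connected → 3 ≤ Y.card →
    ∀ x y z : α, x ∈ Y → y ∈ Y → z ∈ Y → x ≠ y → y ≠ z → x ≠ z →
      ((H.restrict Y).Links x y z ↔ H.Links x y z)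

end NestHypergraph

/-- Finite rooted trees with nodes decorated by finite sets (potential constructs). -/
inductive FTree (α : Type*) : Type _ where
  | node : Finset α → List (FTree α) → FTree α

namespace FTree

variable {α : Type*} [DecidableEq α]

/-- The decoration of the root node. -/
def label : FTree α → Finset α
  | node Y _ => Y

/-- The list of children of the root node. -/
def children : FTree α → List (FTree α)
  | node _ ts => ts

/-- The support of a tree: the union of the decorations of its nodes. -/
def support : FTree α → Finset α
  | node Y [] => Y
  | node Y (t :: ts) => support t ∪ support (node Y ts)

/-- The list of decorations of the nodes of a tree. -/
def labels : FTree α → List (Finset α)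
  | node Y [] => [Y]
  | node Y (t :: ts) => labels t ++ labels (node Y ts)

/-- The dimension of a construct: the sum over its nodes `X` of `|X| - 1`. -/
def dim (T : FTree α) : ℕ := (T.labels.map fun X => X.card - 1).sum

mutual
  /-- The (full) subtree rooted at the node decorated by `X`, if any. -/
  def subtreeAt : FTree α → Finset α → Option (FTree α)
    | node Y ts, X => if Y = X then some (node Y ts) else subtreeAtList ts X
  def subtreeAtList : List (FTree α) → Finset α → Option (FTree α)
    | [], _ => none
    | t :: ts, X => (subtreeAt t X).elim (subtreeAtList ts X) some
end

/-- The support `supp (T ↾ X)` of the subtree rooted at the node decorated by `X`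
(or `∅` if there is no such node). -/
def suppAt (T : FTree α) (X : Finset α) : Finset α :=
  ((T.subtreeAt X).map support).getD ∅

mutual
  /-- The list of supports of the subtrees rooted at the nodes of `T` (its nested set). -/
  def nests : FTree α → List (Finset α)
    | node Y ts => support (node Y ts) :: nestsList ts
  def nestsList : List (FTree α) → List (Finset α)
    | [] => []
    | t :: ts => nests t ++ nestsList ts
end

/-- The nested set of a tree, as a finite set. -/
def nestSet (T : FTree α) : Finset (Finset α) := T.nests.toFinset

/-- `S ≺ T` (`S` is covered by `T`) in the face order: `T` is obtained from `S` by
contracting one edge between a node and its father (equivalently, the nested set of `T`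
is obtained from that of `S` by removing one non-root element). -/
def CoveredBy (S T : FTree α) : Prop :=
  ∃ N ∈ S.nests, N ≠ S.support ∧ T.nestSet = S.nestSet.erase N

/-- The face (subface) order `S ≼ T` on constructs: the reflexive–transitive closure of
the covering relation `≺`. -/
def FaceLe (S T : FTree α) : Prop := Relation.ReflTransGen CoveredBy S T

/-- `IsSubtree S T`: `S` is a (full) subtree of `T`. -/
inductive IsSubtree : FTree α → FTree α → Prop
  | refl (t : FTree α) : IsSubtree t t
  | child {s t u : FTree α} : IsSubtree s t → t ∈ u.children → IsSubtree s u

/-- In `T`, the node decorated by `X` has a child decorated by `Y`. -/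
def ParentChild (X Y : Finset α) (T : FTree α) : Prop :=
  ∃ R : FTree α, IsSubtree R T ∧ R.label = X ∧ ∃ t ∈ R.children, t.label = Y

mutual
  /-- Pruning: remove all (subtrees rooted at) nodes whose decoration is not a subset
  of `X`, keeping the root. -/
  def prune (X : Finset α) : FTree α → FTree α
    | node Y ts => node Y (pruneList X ts)
  def pruneList (X : Finset α) : List (FTree α) → List (FTree α)
    | [] => []
    | t :: ts => if t.label ⊆ X then prune X t :: pruneList X ts else pruneList X ts
end

end FTree

/-- `IsConstruct H T`: the tree `T` is a construct of the hypergraph `H`: its root `Y` is a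
nonempty subset of the vertices, its children are constructs of the connected components of
`𝓗 ∖ Y` (one for each component, listed by increasing maximal vertex). -/
inductive IsConstruct {α : Type*} [LinearOrder α] : NestHypergraph α → FTree α → Prop
  | node {H : NestHypergraph α} (Y : Finset α) (ts : List (FTree α))
      (hY : Y.Nonempty) (hYsub : Y ⊆ H.verts)
      (hmem : ∀ t ∈ ts, (H.restrict (H.verts \ Y)).IsComponent t.support)
      (hcover : ∀ C : Finset α, (H.restrict (H.verts \ Y)).IsComponent C →
        ∃ t ∈ ts, t.support = C)
      (hsorted : ts.Pairwise fun a b => a.support.max < b.support.max)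
      (hchild : ∀ t ∈ ts, IsConstruct (H.restrict t.support) t) :
      IsConstruct H (FTree.node Y ts)

section ConstructionOrder

variable {α : Type*} [LinearOrder α]

/-- A construction: a construct all of whose nodes are singletons (a vertex of the
nestohedron). -/
def IsConstruction (H : NestHypergraph α) (T : FTree α) : Prop :=
  IsConstruct H T ∧ ∀ X ∈ T.labels, X.card = 1

/-- An `X`-face: a 2-dimensional construct whose unique non-singleton node is decorated
by `X`, of cardinality 3. -/
def IsXFace (H : NestHypergraph α) (X : Finset α) (T : FTree α) : Prop :=
  IsConstruct H T ∧ X.card = 3 ∧ X ∈ T.labels ∧ ∀ Y ∈ T.labels, Y ≠ X → Y.card = 1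

/-- Two distinct constructions are joined by an edge of the nestohedron: both are covered
by a common 1-dimensional construct. -/
def EdgeJoined (H : NestHypergraph α) (S T : FTree α) : Prop :=
  IsConstruction H S ∧ IsConstruction H T ∧ S ≠ T ∧
  ∃ V : FTree α, IsConstruct H V ∧ V.dim = 1 ∧ FTree.CoveredBy S V ∧ FTree.CoveredBy T V

/-- The flip rewriting relation `S → T` on constructions of an ordered hypergraph:
`S` and `T` are the two endpoints of an edge whose 1-dimensional face has unique
non-singleton node `{x, y}` with `x < y`, and in `S` the node `{x}` is the parent of the
node `{y}`. -/
def Flip (H : NestHypergraph α) (S T : FTree α) : Prop :=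
  IsConstruction H S ∧ IsConstruction H T ∧ S ≠ T ∧
  ∃ (V : FTree α) (x y : α), IsConstruct H V ∧ V.dim = 1 ∧ x ≠ y ∧
    ({x, y} : Finset α) ∈ V.labels ∧ FTree.CoveredBy S V ∧ FTree.CoveredBy T V ∧
    FTree.ParentChild ({x} : Finset α) ({y} : Finset α) S ∧ x < y

/-- The coordinate vector of a construction `S` of `H`:
`v^S_x = |{e ∈ Sat(𝓗) : x ∈ e ⊆ supp (S ↾ x)}|`. -/
def coordVec (H : NestHypergraph α) (S : FTree α) (x : α) : ℕ :=
  (H.sat.filter fun e => x ∈ e ∧ e ⊆ S.suppAt {x}).card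

end ConstructionOrder

/-- Raw terms over the signature `Σ_𝓗` (and `Σ^c_𝓗`): variables are (connected) subsets,
function symbols are pairs `(X, Y)` of subsets, applied to a list of arguments. -/
inductive HTerm (α : Type*) : Type _ where
  | var : Finset α → HTerm α
  | app : Finset α → Finset α → List (HTerm α) → HTerm α

namespace HTerm

variable {α : Type*} [DecidableEq α]

/-- The (output) sort of a term. -/
def sortOf : HTerm α → Finset α
  | var A => A
  | app _ Y _ => Y

/-- The list of variables occurring in a term. -/
def varsList : HTerm α → List (Finset α)
  | var A => [A]
  | app _ _ [] => []
  | app X Y (t :: ts) => varsList t ++ varsList (app X Y ts)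

/-- The list of first components of the function symbols occurring in a term. -/
def appFirsts : HTerm α → List (Finset α)
  | var _ => []
  | app X _ [] => [X]
  | app X Y (t :: ts) => appFirsts t ++ appFirsts (app X Y ts)

/-- A term is closed if it contains no variables. -/
def Closed (t : HTerm α) : Prop := t.varsList = []

/-- The union `⋃ var(t)` of the variables of a term. -/
def varsUnion (t : HTerm α) : Finset α := t.varsList.foldr (· ∪ ·) ∅

mutual
  /-- Projection of a term to a decorated tree: every function symbol `(X, Y)` is sent to
  its first component `X`, and all variables are pruned. -/
  def toTree : HTerm α → FTree α
    | .var A => .node A []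
    | .app X _ ts => .node X (toTreeList ts)
  def toTreeList : List (HTerm α) → List (FTree α)
    | [] => []
    | .var _ :: ts => toTreeList ts
    | t :: ts => toTree t :: toTreeList ts
end

end HTerm

/-- Well-formed terms over the signature `Σ_𝓗` associated with the hypergraph `H`:
a variable is a connected subset (its own sort); a function symbol `(X, Y)` (with
`∅ ≠ X ⊆ Y ⊆ H` and `Y` connected) is applied to arguments whose sorts are exactly the
connected components of `𝓗_Y ∖ X`, listed by increasing maximal vertex. -/
inductive IsTerm {α : Type*} [LinearOrder α] (H : NestHypergraph α) : HTerm α → Prop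
  | var (A : Finset α) : A ⊆ H.verts → (H.restrict A).Connected → IsTerm H (.var A)
  | app (X Y : Finset α) (ts : List (HTerm α)) :
      X.Nonempty → X ⊆ Y → Y ⊆ H.verts → (H.restrict Y).Connected →
      (∀ t ∈ ts, (H.restrict (Y \ X)).IsComponent t.sortOf) →
      (∀ C : Finset α, (H.restrict (Y \ X)).IsComponent C → ∃ t ∈ ts, t.sortOf = C) →
      ts.Pairwise (fun a b => a.sortOf.max < b.sortOf.max) →
      (∀ t ∈ ts, IsTerm H t) →
      IsTerm H (.app X Y ts)


/-- The associahedron hypergraph (linear graph) `𝕂ₙ` on `{1, …, n+1}`: all singletons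
together with the edges `{i, i+1}` for `1 ≤ i ≤ n`. -/
def linearH (n : ℕ) : NestHypergraph ℕ where
  verts := Finset.Icc 1 (n + 1)
  edges := (Finset.Icc 1 (n + 1)).image (fun i => {i}) ∪
    (Finset.Icc 1 n).image (fun i => {i, i + 1})
  edges_nonempty := by
    intro e he
    rcases Finset.mem_union.mp he with h | h
    · rcases Finset.mem_image.mp h with ⟨i, _, rfl⟩
      exact ⟨i, Finset.mem_singleton_self i⟩
    · rcases Finset.mem_image.mp h with ⟨i, _, rfl⟩
      exact ⟨i, Finset.mem_insert_self i _⟩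
  edges_subset := by
    intro e he
    rcases Finset.mem_union.mp he with h | h
    · rcases Finset.mem_image.mp h with ⟨i, hi, rfl⟩
      exact Finset.singleton_subset_iff.mpr hi
    · rcases Finset.mem_image.mp h with ⟨i, hi, rfl⟩
      rw [Finset.mem_Icc] at hi
      refine Finset.insert_subset_iff.mpr ⟨?_, Finset.singleton_subset_iff.mpr ?_⟩ <;>
        rw [Finset.mem_Icc] <;> omega
  atomic := fun v hv => Finset.mem_union_left _ (Finset.mem_image_of_mem _ hv)

/-! ### Auxiliary lemmas for Statement 17 -/

namespace Stmt17Aux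

open Finset

theorem hg_ext {α : Type*} [DecidableEq α] {H₁ H₂ : NestHypergraph α}
    (hv : H₁.verts = H₂.verts) (he : H₁.edges = H₂.edges) : H₁ = H₂ := by
  cases H₁; cases H₂; simp_all

theorem restrict_restrict {α : Type*} [DecidableEq α] (H : NestHypergraph α) (A B : Finset α) :
    (H.restrict A).restrict B = H.restrict (B ∩ A) := by
  apply hg_ext
  · show B ∩ (A ∩ H.verts) = B ∩ A ∩ H.verts
    rw [Finset.inter_assoc]
  · show ((H.edges.filter (· ⊆ A)).filter (· ⊆ B)) = H.edges.filter (· ⊆ B ∩ A)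
    rw [Finset.filter_filter]
    apply Finset.filter_congr
    intro e _
    simp only [Finset.subset_inter_iff]
    tauto

theorem restrict_self {α : Type*} [DecidableEq α] (H : NestHypergraph α) :
    H.restrict H.verts = H := by
  apply hg_ext
  · exact Finset.inter_self _
  · exact Finset.filter_true_of_mem H.edges_subset

/-- Any connected subset is contained in a connected component. -/
theorem exists_component {α : Type*} [DecidableEq α] (G : NestHypergraph α) {C : Finset α}
    (hC : C ⊆ G.verts) (hconn : (G.restrict C).Connected) :
    ∃ M, G.IsComponent M ∧ C ⊆ M := by
  classical
  set 𝒟 : Finset (Finset α) :=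
    G.verts.powerset.filter (fun D => C ⊆ D ∧ (G.restrict D).Connected) with h𝒟
  have hCD : C ∈ 𝒟 := by
    simp [h𝒟, Finset.mem_powerset.mpr hC, hC, hconn]
  obtain ⟨M, hM𝒟, hMmax⟩ := Finset.exists_max_image 𝒟 Finset.card ⟨C, hCD⟩
  simp only [h𝒟, Finset.mem_filter, Finset.mem_powerset] at hM𝒟
  refine ⟨M, ⟨hM𝒟.1, hM𝒟.2.2, ?_⟩, hM𝒟.2.1⟩
  intro D hMD hDv hDconn
  have hD𝒟 : D ∈ 𝒟 := by
    simp [h𝒟, Finset.mem_powerset.mpr hDv, hM𝒟.2.1.trans hMD, hDconn]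
  have := hMmax D hD𝒟
  exact (Finset.eq_of_subset_of_card_le hMD this).symm

/-- `X` is an interval of naturals. -/
def IsInterval (X : Finset ℕ) : Prop :=
  ∀ a ∈ X, ∀ b ∈ X, ∀ c, a ≤ c → c ≤ b → c ∈ X

theorem icc_isInterval (m M : ℕ) : IsInterval (Finset.Icc m M) := by
  intro a ha b hb c hac hcb
  rw [Finset.mem_Icc] at *
  omega

theorem cross {X₁ X₂ X : Finset ℕ} (hd : Disjoint X₁ X₂) (hu : X₁ ∪ X₂ = X)
    (hX : IsInterval X) :
    ∀ k a, a ∈ X₁ → a + k ∈ X₂ →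
      ∃ i, i ∈ X ∧ i + 1 ∈ X ∧ ((i ∈ X₁ ∧ i + 1 ∈ X₂) ∨ (i ∈ X₂ ∧ i + 1 ∈ X₁)) := by
  intro k
  induction k with
  | zero =>
    intro a h1 h2
    exact absurd h1 (Finset.disjoint_right.mp hd (by simpa using h2))
  | succ k ih =>
    intro a h1 h2
    have haX : a ∈ X := by rw [← hu]; exact Finset.mem_union_left _ h1
    have hbX : a + (k + 1) ∈ X := by rw [← hu]; exact Finset.mem_union_right _ h2
    have ha1X : a + 1 ∈ X := hX a haX (a + (k + 1)) hbX (a + 1) (by omega) (by omega)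
    have hmem : a + 1 ∈ X₁ ∪ X₂ := by rw [hu]; exact ha1X
    rcases Finset.mem_union.mp hmem with h | h
    · have h2' : a + 1 + k ∈ X₂ := by
        have : a + 1 + k = a + (k + 1) := by omega
        rw [this]; exact h2
      exact ih (a + 1) h h2'
    · exact ⟨a, haX, ha1X, Or.inl ⟨h1, h⟩⟩

theorem exists_cross {X₁ X₂ X : Finset ℕ} (hd : Disjoint X₁ X₂)
    (h1 : X₁.Nonempty) (h2 : X₂.Nonempty) (hu : X₁ ∪ X₂ = X) (hX : IsInterval X) :
    ∃ i, i ∈ X ∧ i + 1 ∈ X ∧ ((i ∈ X₁ ∧ i + 1 ∈ X₂) ∨ (i ∈ X₂ ∧ i + 1 ∈ X₁)) := by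
  obtain ⟨a, ha⟩ := h1
  obtain ⟨b, hb⟩ := h2
  rcases le_or_gt a b with hab | hab
  · have : a + (b - a) ∈ X₂ := by
      have : a + (b - a) = b := by omega
      rw [this]; exact hb
    exact cross hd hu hX (b - a) a ha this
  · have hu' : X₂ ∪ X₁ = X := by rw [Finset.union_comm]; exact hu
    have : b + (a - b) ∈ X₁ := by
      have : b + (a - b) = a := by omega
      rw [this]; exact ha
    obtain ⟨i, hi1, hi2, hi3⟩ := cross hd.symm hu' hX (a - b) b hb this
    exact ⟨i, hi1, hi2, hi3.symm⟩

theorem edge_pair_mem {n i : ℕ} (h1 : 1 ≤ i) (h2 : i + 1 ≤ n + 1) :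
    ({i, i + 1} : Finset ℕ) ∈ (linearH n).edges := by
  apply Finset.mem_union_right
  exact Finset.mem_image_of_mem _ (Finset.mem_Icc.mpr ⟨h1, by omega⟩)

theorem restrict_connected_of_interval {n : ℕ} {X : Finset ℕ}
    (hX : X ⊆ Finset.Icc 1 (n + 1)) (hne : X.Nonempty) (hint : IsInterval X) :
    ((linearH n).restrict X).Connected := by
  have hverts : ((linearH n).restrict X).verts = X := by
    show X ∩ Finset.Icc 1 (n + 1) = X
    exact Finset.inter_eq_left.mpr hX
  constructor
  · rw [hverts]; exact hne
  · intro X₁ X₂ h₁ h₂ hd hu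
    rw [hverts] at hu
    obtain ⟨i, hiX, hi1X, hcase⟩ := exists_cross hd h₁ h₂ hu hint
    have hiIcc := Finset.mem_Icc.mp (hX hiX)
    have hi1Icc := Finset.mem_Icc.mp (hX hi1X)
    refine ⟨{i, i + 1}, ?_, ?_, ?_⟩
    · apply Finset.mem_filter.mpr
      refine ⟨edge_pair_mem hiIcc.1 hi1Icc.2, ?_⟩
      intro a ha
      rcases Finset.mem_insert.mp ha with rfl | ha
      · exact hiX
      · rw [Finset.mem_singleton.mp ha]; exact hi1X
    · intro hsub
      have hm1 : i ∈ ({i, i + 1} : Finset ℕ) := by simp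
      have hm2 : i + 1 ∈ ({i, i + 1} : Finset ℕ) := by simp
      rcases hcase with ⟨hA, hB⟩ | ⟨hA, hB⟩
      · exact Finset.disjoint_left.mp hd (hsub hm2) hB
      · exact Finset.disjoint_left.mp hd (hsub hm1) hA
    · intro hsub
      have hm1 : i ∈ ({i, i + 1} : Finset ℕ) := by simp
      have hm2 : i + 1 ∈ ({i, i + 1} : Finset ℕ) := by simp
      rcases hcase with ⟨hA, hB⟩ | ⟨hA, hB⟩
      · exact Finset.disjoint_right.mp hd (hsub hm1) hA
      · exact Finset.disjoint_right.mp hd (hsub hm2) hB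

theorem interval_of_connected {n : ℕ} {X : Finset ℕ}
    (hX : X ⊆ Finset.Icc 1 (n + 1)) (h : ((linearH n).restrict X).Connected) :
    X.Nonempty ∧ IsInterval X := by
  have hverts : ((linearH n).restrict X).verts = X := by
    show X ∩ Finset.Icc 1 (n + 1) = X
    exact Finset.inter_eq_left.mpr hX
  constructor
  · obtain ⟨v, hv⟩ := h.1
    rw [hverts] at hv
    exact ⟨v, hv⟩
  · intro a ha b hb c hac hcb
    by_contra hc
    set X₁ := X.filter (· < c) with hX₁
    set X₂ := X.filter (c < ·) with hX₂
    have haX₁ : a ∈ X₁ := Finset.mem_filter.mpr ⟨ha, by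
      rcases lt_or_eq_of_le hac with h' | h'
      · exact h'
      · exact absurd (h' ▸ ha) hc⟩
    have hbX₂ : b ∈ X₂ := Finset.mem_filter.mpr ⟨hb, by
      rcases lt_or_eq_of_le hcb with h' | h'
      · exact h'
      · exact absurd (h' ▸ hb) hc⟩
    have hd : Disjoint X₁ X₂ := by
      rw [Finset.disjoint_left]
      intro x hx1 hx2
      have := (Finset.mem_filter.mp hx1).2
      have := (Finset.mem_filter.mp hx2).2
      omega
    have hu : X₁ ∪ X₂ = ((linearH n).restrict X).verts := by
      rw [hverts]
      ext x
      simp only [hX₁, hX₂, Finset.mem_union, Finset.mem_filter]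
      constructor
      · rintro (⟨h', _⟩ | ⟨h', _⟩) <;> exact h'
      · intro hx
        rcases lt_trichotomy x c with h' | h' | h'
        · exact Or.inl ⟨hx, h'⟩
        · exact absurd (h' ▸ hx) hc
        · exact Or.inr ⟨hx, h'⟩
    obtain ⟨e, he, hne1, hne2⟩ := h.2 X₁ X₂ ⟨a, haX₁⟩ ⟨b, hbX₂⟩ hd hu
    rcases Finset.mem_filter.mp he with ⟨heE, heX⟩
    rcases Finset.mem_union.mp heE with h' | h'
    · rcases Finset.mem_image.mp h' with ⟨i, _, rfl⟩
      have hiX : i ∈ X := heX (Finset.mem_singleton_self i)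
      have hic : i ≠ c := fun h'' => hc (h'' ▸ hiX)
      rcases Nat.lt_or_ge i c with h'' | h''
      · exact hne1 (Finset.singleton_subset_iff.mpr (Finset.mem_filter.mpr ⟨hiX, h''⟩))
      · exact hne2 (Finset.singleton_subset_iff.mpr
          (Finset.mem_filter.mpr ⟨hiX, lt_of_le_of_ne h'' (Ne.symm hic)⟩))
    · rcases Finset.mem_image.mp h' with ⟨i, _, rfl⟩
      have hiX : i ∈ X := heX (by simp)
      have hi1X : i + 1 ∈ X := heX (by simp)
      have hic : i ≠ c := fun h'' => hc (h'' ▸ hiX)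
      have hi1c : i + 1 ≠ c := fun h'' => hc (h'' ▸ hi1X)
      -- both i and i+1 are on one side of c
      rcases Nat.lt_or_ge i c with h'' | h''
      · rcases Nat.lt_or_ge (i + 1) c with h''' | h'''
        · apply hne1
          intro x hx
          rcases Finset.mem_insert.mp hx with rfl | hx
          · exact Finset.mem_filter.mpr ⟨hiX, h''⟩
          · rw [Finset.mem_singleton.mp hx]
            exact Finset.mem_filter.mpr ⟨hi1X, h'''⟩
        · omega
      · apply hne2
        intro x hx
        rcases Finset.mem_insert.mp hx with rfl | hx
        · exact Finset.mem_filter.mpr ⟨hiX, lt_of_le_of_ne h'' (Ne.symm hic)⟩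
        · rw [Finset.mem_singleton.mp hx]
          exact Finset.mem_filter.mpr ⟨hi1X, by omega⟩

theorem sameComponent_iff {n : ℕ} {S : Finset ℕ} (hS : S ⊆ Finset.Icc 1 (n + 1))
    {y z : ℕ} (hy : y ∈ S) (hz : z ∈ S) :
    ((linearH n).restrict S).SameComponent y z ↔ Finset.Icc (min y z) (max y z) ⊆ S := by
  constructor
  · rintro ⟨C, ⟨hCsub, hCconn, -⟩, hyC, hzC⟩
    have hCS : C ⊆ S := by
      intro c hc
      exact (Finset.mem_inter.mp (hCsub hc)).1
    rw [restrict_restrict] at hCconn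
    have hCSeq : C ∩ S = C := Finset.inter_eq_left.mpr hCS
    rw [hCSeq] at hCconn
    have hCint := (interval_of_connected (hCS.trans hS) hCconn).2
    intro c hc
    rw [Finset.mem_Icc] at hc
    have hminC : min y z ∈ C := by rcases min_choice y z with h | h <;> rw [h] <;> assumption
    have hmaxC : max y z ∈ C := by rcases max_choice y z with h | h <;> rw [h] <;> assumption
    exact hCS (hCint _ hminC _ hmaxC c hc.1 hc.2)
  · intro hIcc
    set C₀ := Finset.Icc (min y z) (max y z) with hC₀
    have hC₀S : C₀ ⊆ S := hIcc
    have hyC₀ : y ∈ C₀ := Finset.mem_Icc.mpr ⟨min_le_left _ _, le_max_left _ _⟩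
    have hzC₀ : z ∈ C₀ := Finset.mem_Icc.mpr ⟨min_le_right _ _, le_max_right _ _⟩
    have hconn : (((linearH n).restrict S).restrict C₀).Connected := by
      rw [restrict_restrict, Finset.inter_eq_left.mpr hC₀S]
      exact restrict_connected_of_interval (hC₀S.trans hS) ⟨y, hyC₀⟩ (icc_isInterval _ _)
    have hC₀v : C₀ ⊆ ((linearH n).restrict S).verts := by
      show C₀ ⊆ S ∩ Finset.Icc 1 (n + 1)
      exact Finset.subset_inter hC₀S (hC₀S.trans hS)
    obtain ⟨M, hM, hCM⟩ := exists_component _ hC₀v hconn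
    exact ⟨M, hM, hCM hyC₀, hCM hzC₀⟩

theorem links_iff {n : ℕ} {S : Finset ℕ} (hS : S ⊆ Finset.Icc 1 (n + 1))
    {x y z : ℕ} (hy : y ∈ S) (hz : z ∈ S) (hxy : y ≠ x) (hxz : z ≠ x) :
    ((linearH n).restrict S).Links x y z ↔
      Finset.Icc (min y z) (max y z) ⊆ S \ {x} := by
  have hverts : ((linearH n).restrict S).verts = S := by
    show S ∩ Finset.Icc 1 (n + 1) = S
    exact Finset.inter_eq_left.mpr hS
  unfold NestHypergraph.Links
  rw [hverts, restrict_restrict, Finset.inter_eq_left.mpr (Finset.sdiff_subset)]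
  exact sameComponent_iff ((Finset.sdiff_subset).trans hS)
    (Finset.mem_sdiff.mpr ⟨hy, by simpa using hxy⟩)
    (Finset.mem_sdiff.mpr ⟨hz, by simpa using hxz⟩)

end Stmt17Aux

/-- Theorem `thm:examples` (c).  Every associahedron hypergraph `𝕂ₙ`
(the linear graph on `n+1` vertices) is a connected contextual hypergraph. -/
theorem stmt17 : ∀ n : ℕ, (linearH n).Connected ∧ (linearH n).Contextual := by
  intro n
  have hIccInt : Stmt17Aux.IsInterval (Finset.Icc 1 (n + 1)) := Stmt17Aux.icc_isInterval _ _
  have hconn : (linearH n).Connected := by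
    have := Stmt17Aux.restrict_connected_of_interval (n := n)
      (le_refl (Finset.Icc 1 (n + 1))) ⟨1, Finset.mem_Icc.mpr ⟨le_refl 1, by omega⟩⟩ hIccInt
    rwa [show ((linearH n).restrict (Finset.Icc 1 (n + 1))) = linearH n from
      Stmt17Aux.restrict_self (linearH n)] at this
  refine ⟨hconn, ?_⟩
  intro Y hYsub hYconn hcard x y z hxmem hymem hzmem hxy hyz hxz
  have hYint := (Stmt17Aux.interval_of_connected hYsub hYconn).2
  set I := Finset.Icc (min y z) (max y z) with hI
  have hIY : I ⊆ Y := by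
    intro c hc
    rw [Finset.mem_Icc] at hc
    have hminY : min y z ∈ Y := by rcases min_choice y z with h | h <;> rw [h] <;> assumption
    have hmaxY : max y z ∈ Y := by rcases max_choice y z with h | h <;> rw [h] <;> assumption
    exact hYint _ hminY _ hmaxY c hc.1 hc.2
  have hL1 : ((linearH n).restrict Y).Links x y z ↔ I ⊆ Y \ {x} :=
    Stmt17Aux.links_iff hYsub hymem hzmem hxy.symm (Ne.symm hxz)
  have hL2 : (linearH n).Links x y z ↔ I ⊆ Finset.Icc 1 (n + 1) \ {x} := by
    have := Stmt17Aux.links_iff (n := n) (le_refl (Finset.Icc 1 (n + 1)))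
      (hYsub hymem) (hYsub hzmem) hxy.symm (Ne.symm hxz) (x := x)
    rwa [show ((linearH n).restrict (Finset.Icc 1 (n + 1))) = linearH n from
      Stmt17Aux.restrict_self (linearH n)] at this
  rw [hL1, hL2, Finset.subset_sdiff, Finset.subset_sdiff]
  simp only [Finset.disjoint_singleton_right]
  constructor
  · rintro ⟨-, hx⟩
    exact ⟨hIY.trans hYsub, hx⟩
  · rintro ⟨-, hx⟩
    exact ⟨hIY, hx⟩

end
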